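/- Let n be a positive even integer. Then for all v_0,…,v_n ∈ ℝⁿ: pcoc(v_0,…,v_n) = (−1)^{n/2} · 2^n · smi(v_0,…,v_n). -/

import Mathlib

noncomputable section

/-- Sign of the determinant of the matrix whose columns are `v 0, …, v (n-1)`
(zero if they do not form a basis). -/
def oriV {n : ℕ} (v : Fin n → (Fin n → ℝ)) : ℝ :=
  Real.sign (Matrix.det (Matrix.of fun i j => v j i))

/-- A `k`-tuple of vectors of `ℝⁿ` is hereditarily spanning if every subcollection of `n`
of its entries spans `ℝⁿ`. -/
def HerSpan {n k : ℕ} (v : Fin k → (Fin n → ℝ)) : Prop :=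
  ∀ s : Finset (Fin k), s.card = n → Submodule.span ℝ (v '' ↑s) = ⊤

open Classical in
/-- The Sullivan cocycle: `sul(v_0,…,v_n) = 0` unless `0` lies in the interior of the
convex hull of `{v_0,…,v_n}`, in which case `sul(v_0,…,v_n) = (−1)^i ori(v_0,…,v̂_i,…,v_n)`
(independent of `i`; we take `i = 0`). -/
def sul {n : ℕ} (v : Fin (n + 1) → (Fin n → ℝ)) : ℝ :=
  if (0 : Fin n → ℝ) ∈ interior (convexHull ℝ (Set.range v)) then
    oriV (v ∘ (0 : Fin (n + 1)).succAbove)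
  else 0

/-- Smillie's averaged cocycle: `smi(v_0,…,v_n) = 2^{−(n+1)} ∑_{σ ∈ {±1}^{n+1}}
sul(σ_0 v_0, …, σ_n v_n)`. -/
def smi {n : ℕ} (v : Fin (n + 1) → (Fin n → ℝ)) : ℝ :=
  ((2 : ℝ) ^ (n + 1))⁻¹ *
    ∑ σ : Fin (n + 1) → Bool, sul (fun i => (if σ i then (1 : ℝ) else -1) • v i)

/-- `pcoc(v_0,…,v_n) = ∏_{i=0}^{n} ori(v_0,…,v̂_i,…,v_n)`. -/
def pcoc {n : ℕ} (v : Fin (n + 1) → (Fin n → ℝ)) : ℝ :=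
  ∏ i : Fin (n + 1), oriV (v ∘ i.succAbove)

/-! ### Auxiliary definitions and lemmas -/

/-- The determinant of the matrix obtained by deleting the `i`-th column. -/
def dd {n : ℕ} (v : Fin (n + 1) → (Fin n → ℝ)) (i : Fin (n + 1)) : ℝ :=
  Matrix.det (Matrix.of fun a b => (v ∘ i.succAbove) b a)

/-- The signed cofactors, giving a linear dependency among the `v i`. -/
def lam {n : ℕ} (v : Fin (n + 1) → (Fin n → ℝ)) (i : Fin (n + 1)) : ℝ :=
  (-1 : ℝ) ^ (i : ℕ) * dd v i

lemma oriV_eq_sign_dd {n : ℕ} (v : Fin (n + 1) → (Fin n → ℝ)) (i : Fin (n + 1)) :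
    oriV (v ∘ i.succAbove) = Real.sign (dd v i) := rfl

lemma cofactor {n : ℕ} (v : Fin (n + 1) → (Fin n → ℝ)) (k : Fin n) :
    ∑ j : Fin (n + 1), lam v j * v j k = 0 := by
  set B : Matrix (Fin (n + 1)) (Fin (n + 1)) ℝ :=
    Matrix.of fun i j => Fin.cases (v j k) (fun i' => v j i') i with hB
  have hdet : B.det = 0 :=
    Matrix.det_zero_of_row_eq (i := 0) (j := k.succ) (Fin.succ_ne_zero k).symm
      (by ext j; simp [hB])
  rw [Matrix.det_succ_row_zero] at hdet
  rw [← hdet]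
  apply Finset.sum_congr rfl
  intro j _
  have : (B.submatrix Fin.succ j.succAbove) = Matrix.of fun a b => (v ∘ j.succAbove) b a := by
    ext a b
    simp [hB]
  have hB0 : B 0 j = v j k := by simp [hB]
  rw [this, hB0]
  simp [lam, dd]
  ring

lemma cofactorv {n : ℕ} (v : Fin (n + 1) → (Fin n → ℝ)) :
    ∑ j : Fin (n + 1), lam v j • v j = 0 := by
  funext k
  rw [Finset.sum_apply]
  simpa using cofactor v k

lemma det_ne_zero_iff_li {n : ℕ} (u : Fin n → Fin n → ℝ) :
    Matrix.det (Matrix.of fun a b => u b a) ≠ 0 ↔ LinearIndependent ℝ u := by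
  have h : LinearIndependent ℝ u ↔ IsUnit (Matrix.of fun a b => u b a).transpose := by
    have h2 := Matrix.linearIndependent_rows_iff_isUnit
      (A := (Matrix.of fun a b => u b a).transpose) (K := ℝ)
    have : (Matrix.of fun a b => u b a).transpose.row = u := by
      ext j a; simp [Matrix.transpose]
    rwa [this] at h2
  rw [h, Matrix.isUnit_iff_isUnit_det, Matrix.det_transpose, isUnit_iff_ne_zero]

lemma det_ne_zero_of_span {n : ℕ} (u : Fin n → Fin n → ℝ)
    (hs : Submodule.span ℝ (Set.range u) = ⊤) :
    Matrix.det (Matrix.of fun a b => u b a) ≠ 0 := by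
  rw [det_ne_zero_iff_li]
  exact linearIndependent_of_top_le_span_of_card_eq_finrank hs.ge
    (by simp [Module.finrank_fintype_fun_eq_card])

lemma interior_repr {n : ℕ} {w : Fin (n + 1) → (Fin n → ℝ)}
    (h : (0 : Fin n → ℝ) ∈ interior (convexHull ℝ (Set.range w))) :
    AffineIndependent ℝ w ∧ ∃ μ : Fin (n + 1) → ℝ,
      (∀ i, 0 < μ i) ∧ ∑ i, μ i = 1 ∧ ∑ i, μ i • w i = 0 := by
  have hne : (interior (convexHull ℝ (Set.range w))).Nonempty := ⟨0, h⟩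
  have hsp : affineSpan ℝ (Set.range w) = ⊤ := by
    rwa [interior_convexHull_nonempty_iff_affineSpan_eq_top] at hne
  have hvs : vectorSpan ℝ (Set.range w) = ⊤ :=
    AffineSubspace.vectorSpan_eq_top_of_affineSpan_eq_top ℝ _ _ hsp
  have hai : AffineIndependent ℝ w := by
    rw [affineIndependent_iff_finrank_vectorSpan_eq ℝ w (n := n) (by simp)]
    rw [hvs]
    simp [Module.finrank_fintype_fun_eq_card]
  refine ⟨hai, ?_⟩
  let b : AffineBasis (Fin (n + 1)) ℝ (Fin n → ℝ) := ⟨w, hai, hsp⟩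
  have hbw : ⇑b = w := rfl
  have hpos : ∀ i, 0 < b.coord i 0 := by
    have := b.interior_convexHull
    rw [hbw] at this
    rw [this] at h
    exact h
  have hsum1 : ∑ i, b.coord i 0 = 1 := b.sum_coord_apply_eq_one 0
  refine ⟨fun i => b.coord i 0, hpos, hsum1, ?_⟩
  have := b.affineCombination_coord_eq_self (0 : Fin n → ℝ)
  rw [Finset.affineCombination_eq_linear_combination _ _ _ hsum1, hbw] at this
  exact this

lemma dd_ne_zero_of_mem_interior {n : ℕ} {w : Fin (n + 1) → (Fin n → ℝ)}
    (h : (0 : Fin n → ℝ) ∈ interior (convexHull ℝ (Set.range w))) :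
    ∀ i, dd w i ≠ 0 := by
  have hne : (interior (convexHull ℝ (Set.range w))).Nonempty := ⟨0, h⟩
  have hsp : affineSpan ℝ (Set.range w) = ⊤ := by
    rwa [interior_convexHull_nonempty_iff_affineSpan_eq_top] at hne
  have hvs : vectorSpan ℝ (Set.range w) = ⊤ :=
    AffineSubspace.vectorSpan_eq_top_of_affineSpan_eq_top ℝ _ _ hsp
  have hspan : Submodule.span ℝ (Set.range w) = ⊤ := by
    rw [eq_top_iff, ← hvs, vectorSpan_def, Submodule.span_le]
    rintro x ⟨a, ha, b, hb, rfl⟩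
    exact sub_mem (Submodule.subset_span ha) (Submodule.subset_span hb)
  obtain ⟨hai, μ, hpos, hs1, hs0⟩ := interior_repr h
  intro i
  apply det_ne_zero_of_span
  have hwj : ∀ j, j ≠ i → w j ∈ Submodule.span ℝ (Set.range (w ∘ i.succAbove)) := by
    intro j hj
    obtain ⟨l, hl⟩ := Fin.exists_succAbove_eq hj
    exact Submodule.subset_span ⟨l, by simp [hl]⟩
  have hwi : w i ∈ Submodule.span ℝ (Set.range (w ∘ i.succAbove)) := by
    have hsplit : μ i • w i + ∑ j ∈ Finset.univ.erase i, μ j • w j = 0 := by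
      rw [← hs0]
      exact Finset.add_sum_erase _ (fun j => μ j • w j) (Finset.mem_univ i)
    have hwieq : w i = (μ i)⁻¹ • (-(∑ j ∈ Finset.univ.erase i, μ j • w j)) := by
      have := eq_neg_of_add_eq_zero_left hsplit
      rw [← this, smul_smul, inv_mul_cancel₀ (hpos i).ne', one_smul]
    rw [hwieq]
    refine Submodule.smul_mem _ _ (Submodule.neg_mem _ (Submodule.sum_mem _ ?_))
    intro j hjmem
    exact Submodule.smul_mem _ _ (hwj j (Finset.ne_of_mem_erase hjmem))
  have : Set.range w ⊆ (Submodule.span ℝ (Set.range (w ∘ i.succAbove)) : Set (Fin n → ℝ)) := by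
    rintro x ⟨j, rfl⟩
    by_cases hj : j = i
    · subst hj; exact hwi
    · exact hwj j hj
  rw [eq_top_iff, ← hspan]
  exact Submodule.span_le.mpr this

lemma kernel_step {n : ℕ} {w : Fin (n + 1) → (Fin n → ℝ)}
    (hind : LinearIndependent ℝ (w ∘ (0 : Fin (n + 1)).succAbove))
    {g : Fin (n + 1) → ℝ} (h0 : g 0 = 0) (hsum : ∑ j, g j • w j = 0) : ∀ j, g j = 0 := by
  have hs : ∑ l : Fin n, g l.succ • (w ∘ (0 : Fin (n + 1)).succAbove) l = 0 := by
    rw [← hsum, Fin.sum_univ_succ, h0, zero_smul, zero_add]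
    apply Finset.sum_congr rfl
    intro l _
    simp [Fin.zero_succAbove]
  have := Fintype.linearIndependent_iff.mp hind (fun l => g l.succ) hs
  intro j
  cases j using Fin.cases with
  | zero => exact h0
  | succ l => exact this l

lemma pos_case_interior {n : ℕ} {w : Fin (n + 1) → (Fin n → ℝ)} {c : Fin (n + 1) → ℝ}
    (hpos : ∀ j, 0 < c j) (hsum : ∑ j, c j • w j = 0)
    (hind : LinearIndependent ℝ (w ∘ (0 : Fin (n + 1)).succAbove)) :
    (0 : Fin n → ℝ) ∈ interior (convexHull ℝ (Set.range w)) := by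
  set s : ℝ := ∑ j, c j with hsdef
  have hspos : 0 < s := Finset.sum_pos (fun j _ => hpos j) ⟨0, Finset.mem_univ 0⟩
  set μ : Fin (n + 1) → ℝ := fun j => c j / s with hμ
  have hμpos : ∀ j, 0 < μ j := fun j => div_pos (hpos j) hspos
  have hμ1 : ∑ j, μ j = 1 := by
    rw [hμ, ← Finset.sum_div]
    exact div_self hspos.ne'
  have hμ0 : ∑ j, μ j • w j = 0 := by
    have : ∑ j, μ j • w j = s⁻¹ • ∑ j, c j • w j := by
      rw [Finset.smul_sum]
      apply Finset.sum_congr rfl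
      intro j _
      rw [smul_smul, hμ]
      ring_nf
    rw [this, hsum, smul_zero]
  have hai : AffineIndependent ℝ w := by
    rw [affineIndependent_iff]
    intro t f hf0 hfw
    set f' : Fin (n + 1) → ℝ := fun j => if j ∈ t then f j else 0 with hf'
    have hf'0 : ∑ j, f' j = 0 := by
      rw [hf', Finset.sum_ite_mem, Finset.univ_inter]; exact hf0
    have hf'w : ∑ j, f' j • w j = 0 := by
      rw [← hfw]
      rw [show (∑ j, f' j • w j) = ∑ j ∈ t, f' j • w j by
        refine (Finset.sum_subset (Finset.subset_univ t) ?_).symm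
        intro x _ hx
        simp [hf', hx]]
      apply Finset.sum_congr rfl
      intro x hx
      simp [hf', hx]
    have hker : ∀ j, c 0 * f' j - f' 0 * c j = 0 := by
      apply kernel_step hind
      · ring
      · rw [show (∑ j, (c 0 * f' j - f' 0 * c j) • w j)
            = c 0 • (∑ j, f' j • w j) - f' 0 • (∑ j, c j • w j) by
          rw [Finset.smul_sum, Finset.smul_sum, ← Finset.sum_sub_distrib]
          apply Finset.sum_congr rfl
          intro j _
          rw [smul_smul, smul_smul, sub_smul]]
        rw [hf'w, hsum, smul_zero, smul_zero, sub_zero]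
    have hf00 : f' 0 = 0 := by
      have : c 0 * (∑ j, f' j) - f' 0 * s = 0 := by
        rw [hsdef, Finset.mul_sum, Finset.mul_sum, ← Finset.sum_sub_distrib]
        exact Finset.sum_eq_zero fun j _ => hker j
      rw [hf'0, mul_zero, zero_sub, neg_eq_zero] at this
      exact (mul_eq_zero.mp this).resolve_right hspos.ne'
    intro e he
    have := hker e
    rw [hf00, zero_mul, sub_zero] at this
    have hfe := (mul_eq_zero.mp this).resolve_left (hpos 0).ne'
    simpa [hf', he] using hfe
  have htop : affineSpan ℝ (Set.range w) = ⊤ := by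
    rw [hai.affineSpan_eq_top_iff_card_eq_finrank_add_one]
    simp [Module.finrank_fintype_fun_eq_card]
  let b : AffineBasis (Fin (n + 1)) ℝ (Fin n → ℝ) := ⟨w, hai, htop⟩
  have hbw : ⇑b = w := rfl
  rw [show Set.range w = Set.range ⇑b from rfl, b.interior_convexHull]
  intro i
  have hcomb : Finset.univ.affineCombination ℝ ⇑b μ = 0 := by
    rw [Finset.affineCombination_eq_linear_combination _ _ _ hμ1, hbw, hμ0]
  have := b.coord_apply_combination_of_mem (Finset.mem_univ i) hμ1
  rw [hcomb] at this
  rw [this]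
  exact hμpos i

lemma mem_interior_iff_signs {n : ℕ} {w : Fin (n + 1) → (Fin n → ℝ)} {c : Fin (n + 1) → ℝ}
    (hc : ∀ j, c j ≠ 0) (hsum : ∑ j, c j • w j = 0)
    (hind : LinearIndependent ℝ (w ∘ (0 : Fin (n + 1)).succAbove)) :
    (0 : Fin n → ℝ) ∈ interior (convexHull ℝ (Set.range w)) ↔
      ((∀ j, 0 < c j) ∨ (∀ j, c j < 0)) := by
  constructor
  · intro h
    obtain ⟨-, μ, hμpos, hμ1, hμ0⟩ := interior_repr h
    have hker : ∀ j, c 0 * μ j - μ 0 * c j = 0 := by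
      apply kernel_step hind
      · ring
      · rw [show (∑ j, (c 0 * μ j - μ 0 * c j) • w j)
            = c 0 • (∑ j, μ j • w j) - μ 0 • (∑ j, c j • w j) by
          rw [Finset.smul_sum, Finset.smul_sum, ← Finset.sum_sub_distrib]
          apply Finset.sum_congr rfl
          intro j _
          rw [smul_smul, smul_smul, sub_smul]]
        rw [hμ0, hsum, smul_zero, smul_zero, sub_zero]
    rcases (hc 0).lt_or_gt with h0 | h0
    · right
      intro j
      have := hker j
      nlinarith [hμpos 0, hμpos j]
    · left
      intro j
      have := hker j
      nlinarith [hμpos 0, hμpos j]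
  · rintro (h | h)
    · exact pos_case_interior h hsum hind
    · refine pos_case_interior (c := fun j => -(c j)) (fun j => neg_pos.mpr (h j)) ?_ hind
      rw [show (∑ j, -(c j) • w j) = -∑ j, c j • w j by
        rw [← Finset.sum_neg_distrib]
        exact Finset.sum_congr rfl fun j _ => (neg_smul _ _)]
      rw [hsum, neg_zero]

lemma dd_smul {n : ℕ} (v : Fin (n + 1) → (Fin n → ℝ)) (e : Fin (n + 1) → ℝ) (i : Fin (n + 1)) :
    dd (fun j => e j • v j) i = (∏ l : Fin n, e (i.succAbove l)) * dd v i := by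
  have : (Matrix.of fun a b => ((fun j => e j • v j) ∘ i.succAbove) b a)
      = (Matrix.of fun a b => (v ∘ i.succAbove) b a) *
        Matrix.diagonal (fun b => e (i.succAbove b)) := by
    ext a b
    simp [Matrix.mul_diagonal, mul_comm]
  rw [dd, this, Matrix.det_mul, Matrix.det_diagonal, dd]
  ring

lemma sign_pm_mul {q : ℝ} (hq : q = 1 ∨ q = -1) (x : ℝ) :
    Real.sign (q * x) = q * Real.sign x := by
  rcases hq with h | h <;> subst h
  · simp
  · rw [show (-1 : ℝ) * x = -x by ring, Real.sign_neg]
    ring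

lemma pm_of_sign {x : ℝ} (hx : x ≠ 0) : Real.sign x = 1 ∨ Real.sign x = -1 :=
  (Real.sign_apply_eq_of_ne_zero x hx).symm

lemma iff_pos_bool {x : ℝ} (hx : x ≠ 0) (b : Bool) :
    (0 < (if b then (1 : ℝ) else -1) * x) ↔ b = decide (0 < x) := by
  rcases hx.lt_or_gt with h | h <;> cases b <;>
    simp [h, not_lt.mpr h.le, decide_eq_true_eq]

lemma iff_neg_bool {x : ℝ} (hx : x ≠ 0) (b : Bool) :
    ((if b then (1 : ℝ) else -1) * x < 0) ↔ b = !decide (0 < x) := by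
  rcases hx.lt_or_gt with h | h <;> cases b <;>
    simp [h, not_lt.mpr h.le, decide_eq_true_eq]

/-- `pcoc = (−1)^{n/2} · 2^n · smi`. -/
theorem stmt19 (n : ℕ) (hn : 0 < n) (he : Even n) (v : Fin (n + 1) → (Fin n → ℝ)) :
    pcoc v = (-1 : ℝ) ^ (n / 2) * 2 ^ n * smi v := by
  classical
  obtain ⟨m, hm⟩ := he
  have hm2 : n / 2 = m := by omega
  by_cases hgen : ∀ i, dd v i ≠ 0
  · -- general position case
    have hlam : ∀ j, lam v j ≠ 0 := fun j =>
      mul_ne_zero (pow_ne_zero _ (by norm_num)) (hgen j)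
    set sp : Fin (n + 1) → Bool := fun j => decide (0 < lam v j) with hsp
    set sm' : Fin (n + 1) → Bool := fun j => !(sp j) with hsm
    set Q : ℝ := ∏ l : Fin n, Real.sign (lam v ((0 : Fin (n + 1)).succAbove l)) with hQ
    have hQpm : Q = 1 ∨ Q = -1 := by
      rw [hQ]
      refine Finset.prod_induction _ (fun q => q = 1 ∨ q = -1) ?_ (Or.inl rfl) ?_
      · rintro a b (ha | ha) (hb | hb) <;> subst ha <;> subst hb <;> norm_num
      · intro l _
        exact pm_of_sign (hlam _)
    have hEp : ∀ j, (if sp j then (1 : ℝ) else -1) = Real.sign (lam v j) := by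
      intro j
      by_cases h : 0 < lam v j
      · simp [hsp, h, Real.sign_of_pos h]
      · have h' : lam v j < 0 := (hlam j).lt_or_gt.resolve_right h
        simp [hsp, h, Real.sign_of_neg h']
    have hEm : ∀ j, (if sm' j then (1 : ℝ) else -1) = -Real.sign (lam v j) := by
      intro j
      rw [← hEp j, hsm]
      by_cases h : sp j <;> simp [h]
    -- the key computation of each summand
    have hkey : ∀ σ : Fin (n + 1) → Bool,
        sul (fun i => (if σ i then (1 : ℝ) else -1) • v i)
          = if σ = sp ∨ σ = sm' then Q * Real.sign (dd v 0) else 0 := by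
      intro σ
      set E : Fin (n + 1) → ℝ := fun i => if σ i then (1 : ℝ) else -1 with hE
      set w : Fin (n + 1) → (Fin n → ℝ) := fun i => E i • v i with hw
      show sul w = _
      have hE2 : ∀ j, E j * E j = 1 := by
        intro j; by_cases h : σ j <;> simp [hE, h]
      have hEne : ∀ j, E j ≠ 0 := by
        intro j; by_cases h : σ j <;> simp [hE, h]
      have hc : ∀ j, E j * lam v j ≠ 0 := fun j => mul_ne_zero (hEne j) (hlam j)
      have hsum : ∑ j, (E j * lam v j) • w j = 0 := by
        rw [← cofactorv v]
        apply Finset.sum_congr rfl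
        intro j _
        rw [hw]
        show (E j * lam v j) • (E j • v j) = lam v j • v j
        rw [smul_smul]
        congr 1
        rw [mul_comm (E j) (lam v j), mul_assoc, hE2 j, mul_one]
      have hdwd : dd w 0 = (∏ l : Fin n, E ((0 : Fin (n + 1)).succAbove l)) * dd v 0 :=
        dd_smul v E 0
      have hPne : (∏ l : Fin n, E ((0 : Fin (n + 1)).succAbove l)) ≠ 0 :=
        Finset.prod_ne_zero_iff.mpr fun l _ => hEne _
      have hdw0 : dd w 0 ≠ 0 := by
        rw [hdwd]; exact mul_ne_zero hPne (hgen 0)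
      have hind : LinearIndependent ℝ (w ∘ (0 : Fin (n + 1)).succAbove) :=
        (det_ne_zero_iff_li _).mp hdw0
      have hiff := mem_interior_iff_signs hc hsum hind
      have hcondp : (∀ j, 0 < E j * lam v j) ↔ σ = sp := by
        rw [funext_iff]
        apply forall_congr'
        intro j
        exact iff_pos_bool (hlam j) (σ j)
      have hcondm : (∀ j, E j * lam v j < 0) ↔ σ = sm' := by
        rw [funext_iff]
        apply forall_congr'
        intro j
        exact iff_neg_bool (hlam j) (σ j)
      have hcond : (0 : Fin n → ℝ) ∈ interior (convexHull ℝ (Set.range w)) ↔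
          (σ = sp ∨ σ = sm') := by
        rw [hiff, hcondp, hcondm]
      by_cases hmem : σ = sp ∨ σ = sm'
      · rw [if_pos hmem]
        unfold sul
        rw [if_pos (hcond.mpr hmem), oriV_eq_sign_dd, hdwd]
        have hPQ : (∏ l : Fin n, E ((0 : Fin (n + 1)).succAbove l)) = Q := by
          rcases hmem with rfl | rfl
          · rw [hQ]
            exact Finset.prod_congr rfl (fun l _ => hEp _)
          · have hfac : ∀ l : Fin n, E ((0 : Fin (n + 1)).succAbove l)
                = (-1) * Real.sign (lam v ((0 : Fin (n + 1)).succAbove l)) := by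
              intro l
              exact (hEm _).trans (by ring)
            rw [Finset.prod_congr rfl (fun l _ => hfac l), Finset.prod_mul_distrib,
              Finset.prod_const, Finset.card_univ, Fintype.card_fin]
            rw [Even.neg_one_pow ⟨m, hm⟩, one_mul]
        rw [hPQ, sign_pm_mul hQpm]
      · rw [if_neg hmem]
        unfold sul
        rw [if_neg (fun h => hmem (hcond.mp h))]
    -- summing up
    have hsum2 : (∑ σ : Fin (n + 1) → Bool, sul (fun i => (if σ i then (1 : ℝ) else -1) • v i))
        = 2 * (Q * Real.sign (dd v 0)) := by
      rw [Finset.sum_congr rfl (fun σ _ => hkey σ)]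
      have hmemiff : ∀ σ : Fin (n + 1) → Bool,
          (σ = sp ∨ σ = sm') ↔ σ ∈ ({sp, sm'} : Finset (Fin (n + 1) → Bool)) := by
        intro σ; simp
      rw [Finset.sum_congr rfl (fun σ _ => by rw [if_congr (hmemiff σ) rfl rfl])]
      rw [Finset.sum_ite_mem, Finset.univ_inter, Finset.sum_const]
      have hne : sp ≠ sm' := by
        intro h
        have := congrFun h 0
        simp [hsm] at this
      rw [Finset.card_insert_of_notMem (by simp [hne]), Finset.card_singleton]
      rw [nsmul_eq_mul]
      norm_num
    -- computing pcoc
    have hpc : pcoc v = (∏ i : Fin (n + 1), (-1 : ℝ) ^ (i : ℕ)) * (Real.sign (lam v 0) * Q) := by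
      unfold pcoc
      have step1 : (∏ i : Fin (n + 1), oriV (v ∘ i.succAbove))
          = ∏ i : Fin (n + 1), ((-1 : ℝ) ^ (i : ℕ) * Real.sign (lam v i)) := by
        apply Finset.prod_congr rfl
        intro i _
        rw [oriV_eq_sign_dd]
        have hdd : dd v i = (-1 : ℝ) ^ (i : ℕ) * lam v i := by
          rw [lam, ← mul_assoc, ← pow_add, Even.neg_one_pow ⟨(i : ℕ), rfl⟩, one_mul]
        rw [hdd, sign_pm_mul (neg_one_pow_eq_or ℝ (i : ℕ))]
      rw [step1, Finset.prod_mul_distrib]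
      congr 1
      rw [Fin.prod_univ_succ]
      congr 1
    have hsgn0 : Real.sign (lam v 0) = Real.sign (dd v 0) := by
      rw [lam]
      norm_num
    have hprodneg : (∏ i : Fin (n + 1), (-1 : ℝ) ^ (i : ℕ)) = (-1) ^ m := by
      rw [Finset.prod_pow_eq_pow_sum]
      have h1 : ∑ i : Fin (n + 1), (i : ℕ) = (n + 1) * m := by
        rw [Fin.sum_univ_eq_sum_range (fun i => i)]
        have h2 := Finset.sum_range_id_mul_two (n + 1)
        rw [Nat.add_sub_cancel] at h2
        have h3 : (n + 1) * n = ((n + 1) * m) * 2 := by rw [hm]; ring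
        rw [h3] at h2
        exact Nat.eq_of_mul_eq_mul_right (by norm_num) h2
      rw [h1, pow_mul, Odd.neg_one_pow ⟨m, by omega⟩]
    unfold smi
    rw [hsum2, hpc, hsgn0, hprodneg, hm2]
    have h2 : (2 : ℝ) ^ (n + 1) ≠ 0 := by positivity
    field_simp
    ring
  · -- degenerate case
    push_neg at hgen
    obtain ⟨i0, h0⟩ := hgen
    have hp : pcoc v = 0 := by
      unfold pcoc
      apply Finset.prod_eq_zero (Finset.mem_univ i0)
      rw [oriV_eq_sign_dd, h0, Real.sign_zero]
    have hs : smi v = 0 := by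
      have hterm : ∀ σ : Fin (n + 1) → Bool,
          sul (fun i => (if σ i then (1 : ℝ) else -1) • v i) = 0 := by
        intro σ
        have hnmem : (0 : Fin n → ℝ) ∉ interior (convexHull ℝ
            (Set.range (fun i => (if σ i then (1 : ℝ) else -1) • v i))) := by
          intro hmem
          have hne := dd_ne_zero_of_mem_interior hmem i0
          have heq := dd_smul v (fun i => if σ i then (1 : ℝ) else -1) i0
          rw [heq, h0, mul_zero] at hne
          exact hne rfl
        unfold sul
        rw [if_neg hnmem]
      unfold smi
      rw [Finset.sum_eq_zero (fun σ _ => hterm σ), mul_zero]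
    rw [hp, hs, mul_zero]

end
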